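/- There is no invariant comply-number game whose set of P-positions is the greedy set avoiding x + z = 3y (with terminal position heap-size 1): if {1} ∈ S is forced (since 2 must have a move to 1 and the only option less than 2 is subtracting 1), then the move set {1} connects the P-positions 4 and 3, a contradiction. -/
import Mathlib


/-- The greedy set avoiding solutions of `x + z = 3 * y`, starting from 1 (terminal
heap-size 1).  It begins 1, 3, 4, 7, 10, ... -/
def greedyC : ℕ → Prop
  | n => 1 ≤ n ∧
      ¬ ∃ a, ∃ _ : a < n, ∃ b, ∃ _ : b < n, greedyC a ∧ greedyC b ∧
        (a + b = 3 * n ∨ a + n = 3 * b ∨ n + n = 3 * a)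
termination_by n => n
decreasing_by all_goals omega

/-- P-positions of the comply-number game played on heap sizes `≥ 1` (terminal
position is heap-size 1): a move set `s ∈ S` is applicable at `x` iff every option
`x - i` still has size at least 1. -/
def complyNumP1 (S : Set (Finset ℕ)) : ℕ → Prop
  | x => ∀ s, s ∈ S → (∀ i ∈ s, i + 1 ≤ x) →
      ∃ i, ∃ _ : i ∈ s, ∃ _ : 0 < i, ∃ _ : i + 1 ≤ x, ¬ complyNumP1 S (x - i)
termination_by x => x
decreasing_by all_goals omega

lemma greedyC_one : greedyC 1 := by
  rw [greedyC]
  refine ⟨le_refl 1, ?_⟩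
  rintro ⟨a, ha, b, hb, ga, gb, -⟩
  interval_cases a
  rw [greedyC] at ga
  omega

lemma greedyC_ge_one {n : ℕ} (h : greedyC n) : 1 ≤ n := by
  rw [greedyC] at h; exact h.1

lemma not_greedyC_two : ¬ greedyC 2 := by
  rw [greedyC]
  rintro ⟨-, h⟩
  exact h ⟨1, by omega, 1, by omega, greedyC_one, greedyC_one, by omega⟩

lemma greedyC_small {n : ℕ} (h : greedyC n) (h4 : n < 4) : n = 1 ∨ n = 3 := by
  have h1 := greedyC_ge_one h
  interval_cases n
  · left; rfl
  · exact absurd h not_greedyC_two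
  · right; rfl

lemma greedyC_three : greedyC 3 := by
  rw [greedyC]
  refine ⟨by omega, ?_⟩
  rintro ⟨a, ha, b, hb, ga, gb, h⟩
  rcases greedyC_small ga (by omega) with rfl | rfl <;>
    rcases greedyC_small gb (by omega) with rfl | rfl <;> omega

lemma greedyC_four : greedyC 4 := by
  rw [greedyC]
  refine ⟨by omega, ?_⟩
  rintro ⟨a, ha, b, hb, ga, gb, h⟩
  rcases greedyC_small ga (by omega) with rfl | rfl <;>
    rcases greedyC_small gb (by omega) with rfl | rfl <;> omega

/-- There is no invariant comply-number game (with terminal position heap-size 1)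
whose set of P-positions is the greedy set avoiding `x + z = 3y`. -/
theorem no_invariant_comply_game_for_greedyC :
    ¬ ∃ S : Set (Finset ℕ), (∀ s ∈ S, s.Nonempty) ∧ (∀ s ∈ S, ∀ i ∈ s, 0 < i) ∧
      (∀ x : ℕ, 1 ≤ x → (complyNumP1 S x ↔ greedyC x)) := by
  rintro ⟨S, -, -, hP⟩
  -- 2 is an N-position, so some move set `s` forces the move `2 → 1`.
  have hn2 : ¬ complyNumP1 S 2 := fun h => not_greedyC_two ((hP 2 (by omega)).1 h)
  rw [complyNumP1] at hn2
  push_neg at hn2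
  obtain ⟨s, hsS, hs2, hforce⟩ := hn2
  -- 4 is a P-position, so `s` (applicable at 4) has a move to an N-position.
  have h4 : complyNumP1 S 4 := (hP 4 (by omega)).2 greedyC_four
  rw [complyNumP1] at h4
  obtain ⟨i, his, hipos, hile, hnot⟩ := h4 s hsS (fun i hi => by have := hs2 i hi; omega)
  -- every element of `s` is `1`, so the move is `4 → 3`, but 3 is a P-position.
  have hi1 : i = 1 := by have := hs2 i his; omega
  subst hi1
  exact hnot ((hP 3 (by omega)).2 greedyC_three)
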